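/- Let q > 1 be a real number and n ≥ 1 an integer. For 0 ≤ l ≤ 2n, let 𝔐_l be the (l+1)×(l+1) real matrix with (i, s)-entry (-q)^{s(2n-i)} (0 ≤ i, s ≤ l), let d_{i,l} (0 ≤ i ≤ l) be the components of the unique solution of 𝔐_l d = (0, …, 0, 1)^T, let Δ be the (2n+1)×(2n+1) upper triangular matrix with Δ_{i,l} = d_{i,l} for i ≤ l, let v ∈ ℝ^{2n+1} have v_0 = 0 and v_k = (-q)^{n(2n-k) - 4n²} - (-q)^{-2n²} for 1 ≤ k ≤ 2n, and let K = (K_0, …, K_{2n}) be the unique solution of (𝔐_{2n}·Δ)·K = v. Then for every 0 ≤ l ≤ n-1, d_{n-l,n-l}·K_{n-l} = (-q)^{-4n²} · ∏_{j=1}^{l} [ (-q)^{n+j} · ((-q)^n - (-q)^{j-1}) / ((-q)^j - 1) ] (the empty product for l = 0 being 1). In particular K_i ≠ 0 for every 1 ≤ i ≤ n. -/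

import Mathlib

/- Closed product form of the constants 𝒦_{n-l}, obtained by iterating the recursion of
Lemma 4.5; in particular K_i ≠ 0 for 1 ≤ i ≤ n. -/

open Finset Polynomial

namespace Stmt10Aux

noncomputable def NN (y : ℝ) (n m : ℕ) : ℝ := ∏ j ∈ range m, (y ^ (n - j) - 1)
noncomputable def DD (y : ℝ) (m : ℕ) : ℝ := ∏ j ∈ range m, (y ^ (j + 1) - 1)

lemma NN_zero (y : ℝ) (n : ℕ) : NN y n 0 = 1 := by simp [NN]
lemma DD_zero (y : ℝ) : DD y 0 = 1 := by simp [DD]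

lemma DD_succ (y : ℝ) (m : ℕ) : DD y (m + 1) = DD y m * (y ^ (m + 1) - 1) := by
  simp [DD, prod_range_succ]

lemma NN_succ (y : ℝ) (n m : ℕ) : NN y n (m + 1) = NN y n m * (y ^ (n - m) - 1) := by
  simp [NN, prod_range_succ]

lemma DD_ne_zero {y : ℝ} (hy : ∀ k : ℕ, 1 ≤ k → y ^ k ≠ 1) (m : ℕ) : DD y m ≠ 0 := by
  refine prod_ne_zero_iff.2 fun j _ => sub_ne_zero.2 (hy (j + 1) (by omega))

lemma NN_ne_zero {y : ℝ} (hy : ∀ k : ℕ, 1 ≤ k → y ^ k ≠ 1) {n m : ℕ} (h : m ≤ n) :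
    NN y n m ≠ 0 := by
  refine prod_ne_zero_iff.2 fun j hj => sub_ne_zero.2 (hy (n - j) ?_)
  have := mem_range.1 hj; omega

lemma NN_degenerate (y : ℝ) {n m : ℕ} (h : n < m) : NN y n m = 0 := by
  refine prod_eq_zero (mem_range.2 h) ?_
  simp [Nat.sub_eq_zero_of_le (le_refl n)]

lemma NN_top_succ (y : ℝ) (n m : ℕ) :
    NN y (n + 1) (m + 1) = (y ^ (n + 1) - 1) * NN y n m := by
  rw [NN, prod_range_succ']
  simp only [Nat.succ_sub_succ_eq_sub, Nat.sub_zero]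
  rw [mul_comm]
  rfl

lemma pascal (y : ℝ) {n m : ℕ} (hm : m ≤ n) :
    NN y (n + 1) (m + 1) = (y ^ (m + 1) - 1) * NN y n m + y ^ (m + 1) * NN y n (m + 1) := by
  rw [NN_top_succ, NN_succ]
  have key : y ^ (m + 1) * y ^ (n - m) = y ^ (n + 1) := by
    rw [← pow_add]; congr 1; omega
  linear_combination (NN y n m) * key.symm

/-- The Newton expansion of `Z ^ n` at geometric nodes. -/
lemma newton {y : ℝ} (hy : ∀ k : ℕ, 1 ≤ k → y ^ k ≠ 1) (n : ℕ) (Z : ℝ) :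
    Z ^ n = ∑ m ∈ range (n + 1), NN y n m / DD y m * ∏ j ∈ range m, (Z - y ^ j) := by
  induction n with
  | zero => simp [NN, DD]
  | succ n ih =>
    have hZ : Z ^ (n + 1) = ∑ m ∈ range (n + 1),
        NN y n m / DD y m * (Z * ∏ j ∈ range m, (Z - y ^ j)) := by
      rw [pow_succ, ih, sum_mul]
      refine sum_congr rfl fun m _ => by ring
    have h1 : ∑ m ∈ range (n + 1), NN y n m / DD y m * (Z * ∏ j ∈ range m, (Z - y ^ j))
        = (∑ m ∈ range (n + 1), NN y n m / DD y m * ∏ j ∈ range (m + 1), (Z - y ^ j))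
          + ∑ m ∈ range (n + 1), y ^ m * (NN y n m / DD y m) * ∏ j ∈ range m, (Z - y ^ j) := by
      rw [← sum_add_distrib]
      refine sum_congr rfl fun m _ => by rw [prod_range_succ]; ring
    have h2 : ∑ m ∈ range (n + 2), y ^ m * (NN y n m / DD y m) * ∏ j ∈ range m, (Z - y ^ j)
        = (∑ m ∈ range (n + 1),
            y ^ (m + 1) * (NN y n (m + 1) / DD y (m + 1)) * ∏ j ∈ range (m + 1), (Z - y ^ j)) + 1 := by
      rw [sum_range_succ']
      simp [NN_zero, DD_zero]
    have h3 : ∑ m ∈ range (n + 2), y ^ m * (NN y n m / DD y m) * ∏ j ∈ range m, (Z - y ^ j)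
        = ∑ m ∈ range (n + 1), y ^ m * (NN y n m / DD y m) * ∏ j ∈ range m, (Z - y ^ j) := by
      rw [sum_range_succ, NN_degenerate y (by omega : n < n + 1)]
      simp
    have h4 : ∀ m ∈ range (n + 1),
        NN y (n + 1) (m + 1) / DD y (m + 1) * ∏ j ∈ range (m + 1), (Z - y ^ j)
        = NN y n m / DD y m * (∏ j ∈ range (m + 1), (Z - y ^ j))
          + y ^ (m + 1) * (NN y n (m + 1) / DD y (m + 1)) * ∏ j ∈ range (m + 1), (Z - y ^ j) := by
      intro m hm
      have hm' : m ≤ n := Nat.lt_succ_iff.mp (mem_range.1 hm)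
      have hD : DD y m ≠ 0 := DD_ne_zero hy m
      have hE : y ^ (m + 1) - 1 ≠ 0 := sub_ne_zero.2 (hy (m + 1) (by omega))
      rw [pascal y hm', DD_succ]
      field_simp
    rw [hZ, h1, sum_range_succ' _ (n + 1)]
    rw [sum_congr rfl h4, sum_add_distrib]
    simp only [NN_zero, DD_zero, prod_range_zero]
    have := h3.symm.trans h2
    linarith [this]

/-- Full-product lemma used for symmetry of Gaussian binomials. -/
lemma NN_mul_DD {y : ℝ} (n : ℕ) : ∀ m, m ≤ n → NN y n m * DD y (n - m) = DD y n := by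
  intro m
  induction m with
  | zero => intro _; simp [NN_zero]
  | succ m ih =>
    intro hm
    have e1 : n - m = n - (m + 1) + 1 := by omega
    rw [NN_succ, ← ih (by omega), e1, DD_succ]
    ring

lemma gauss_symm {y : ℝ} (hy : ∀ k : ℕ, 1 ≤ k → y ^ k ≠ 1) {n m : ℕ} (hm : m ≤ n) :
    NN y n (n - m) / DD y (n - m) = NN y n m / DD y m := by
  have h1 := NN_mul_DD (y := y) n m hm
  have h2 := NN_mul_DD (y := y) n (n - m) (by omega)
  rw [(by omega : n - (n - m) = m)] at h2
  have hDm := DD_ne_zero hy m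
  have hDnm := DD_ne_zero hy (n - m)
  field_simp
  linear_combination h2 - h1

/-- Interpolation lemma. -/
lemma interp (l : ℕ) (c : ℕ → ℝ) (ν : ℕ → ℝ)
    (hinj : ∀ i j, i ≤ l → j ≤ l → ν i = ν j → i = j)
    (hval : ∀ i ≤ l, ∑ s ∈ range (l + 1), c s * ν i ^ s = if i = l then 1 else 0) :
    ∀ w : ℝ, ∑ s ∈ range (l + 1), c s * w ^ s = c l * ∏ m ∈ range l, (w - ν m) := by
  set Q : ℝ[X] := ∑ s ∈ range (l + 1), C (c s) * X ^ s with hQ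
  set R : ℝ[X] := C (c l) * ∏ m ∈ range l, (X - C (ν m)) with hR
  have hQev : ∀ w : ℝ, Q.eval w = ∑ s ∈ range (l + 1), c s * w ^ s := by
    intro w; rw [hQ, eval_finset_sum]; simp
  have hRev : ∀ w : ℝ, R.eval w = c l * ∏ m ∈ range l, (w - ν m) := by
    intro w; rw [hR]; simp [eval_prod]
  have hQcoefF : ∀ k, Q.coeff k = if k ∈ range (l + 1) then c k else 0 := by
    intro k
    rw [hQ, finset_sum_coeff]
    rw [Finset.sum_congr rfl (fun s _ => by rw [coeff_C_mul, coeff_X_pow])]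
    simp [Finset.sum_ite_eq]
  have hmonic : (∏ m ∈ range l, (X - C (ν m))).Monic :=
    monic_prod_of_monic _ _ fun m _ => monic_X_sub_C (ν m)
  have hdeg : (∏ m ∈ range l, (X - C (ν m))).natDegree = l := by
    rw [natDegree_prod_of_monic _ _ fun m _ => monic_X_sub_C (ν m)]
    simp [natDegree_X_sub_C]
  have hRcoeff_l : R.coeff l = c l := by
    have h := hmonic.coeff_natDegree
    rw [hdeg] at h
    rw [hR, coeff_C_mul, h, mul_one]
  have hRcoeff_gt : ∀ k, l < k → R.coeff k = 0 := by
    intro k hk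
    have h : (∏ m ∈ range l, (X - C (ν m))).natDegree < k := by rw [hdeg]; exact hk
    rw [hR, coeff_C_mul, coeff_eq_zero_of_natDegree_lt h, mul_zero]
  have key : Q - R = 0 := by
    by_cases h0 : Q - R = 0
    · exact h0
    exfalso
    have hdlt : (Q - R).degree < (l : ℕ) := by
      rw [degree_lt_iff_coeff_zero]
      intro m hm
      rw [coeff_sub]
      rcases eq_or_lt_of_le hm with h | h
      · rw [← h, hQcoefF, hRcoeff_l]; simp
      · rw [hQcoefF, hRcoeff_gt m h]
        simp [mem_range]; omega
    have hndlt : (Q - R).natDegree < l := (natDegree_lt_iff_degree_lt h0).2 hdlt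
    have heval0 : ∀ i, i < l → (Q - R).eval (ν i) = 0 := by
      intro i hi
      rw [eval_sub, hQev, hRev, hval i hi.le, if_neg hi.ne]
      rw [prod_eq_zero (mem_range.2 hi) (by ring), mul_zero, sub_zero]
    have hcard : ((range l).image ν).card = l := by
      rw [card_image_of_injOn, card_range]
      intro a ha b hb hab
      exact hinj a b (le_of_lt (by simpa using ha)) (le_of_lt (by simpa using hb)) hab
    refine h0 (Polynomial.eq_zero_of_natDegree_lt_card_of_eval_eq_zero' _ ((range l).image ν) ?_ ?_)
    · intro z hz
      obtain ⟨i, hi, rfl⟩ := Finset.mem_image.1 hz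
      exact heval0 i (by simpa using hi)
    · rwa [hcard]
  intro w
  have := congrArg (Polynomial.eval w) key
  rw [eval_sub, eval_zero, sub_eq_zero] at this
  rw [← hQev w, ← hRev w, this]

end Stmt10Aux

open Stmt10Aux

/-- The (l+1)×(l+1) matrix 𝔐_l with (i,s)-entry (-q)^{s(2n-i)}. -/
noncomputable def Mmat (q : ℝ) (n l : ℕ) : Matrix (Fin (l + 1)) (Fin (l + 1)) ℝ :=
  Matrix.of fun i s => (-q) ^ ((s : ℕ) * (2 * n - (i : ℕ)))

theorem stmt10 (q : ℝ) (hq : 1 < q) (n : ℕ) (hn : 1 ≤ n)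
    (d : ℕ → ℕ → ℝ)
    (hd : ∀ l, l ≤ 2 * n →
      (Mmat q n l).mulVec (fun i => d (i : ℕ) l) = Pi.single (Fin.last l) 1)
    (Δ : Matrix (Fin (2 * n + 1)) (Fin (2 * n + 1)) ℝ)
    (hΔ : ∀ i l : Fin (2 * n + 1),
      Δ i l = if (i : ℕ) ≤ (l : ℕ) then d (i : ℕ) (l : ℕ) else 0)
    (v : Fin (2 * n + 1) → ℝ)
    (hv : ∀ k : Fin (2 * n + 1), v k =
      if (k : ℕ) = 0 then 0
      else (-q) ^ ((n : ℤ) * (2 * (n : ℤ) - ((k : ℕ) : ℤ)) - 4 * (n : ℤ) ^ 2)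
        - (-q) ^ (-2 * (n : ℤ) ^ 2))
    (K : Fin (2 * n + 1) → ℝ)
    (hK : (Mmat q n (2 * n) * Δ).mulVec K = v) :
    (∀ l : ℕ, ∀ hl : l ≤ n - 1,
      d (n - l) (n - l) * K ⟨n - l, by omega⟩ =
        (-q) ^ (-4 * (n : ℤ) ^ 2) *
          ∏ j ∈ Finset.Icc 1 l,
            ((-q) ^ ((n : ℤ) + (j : ℤ)) *
              (((-q) ^ (n : ℤ) - (-q) ^ ((j : ℤ) - 1)) / ((-q) ^ (j : ℤ) - 1)))) ∧
    (∀ i : ℕ, ∀ h1 : 1 ≤ i, ∀ h2 : i ≤ n, K ⟨i, by omega⟩ ≠ 0) := by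
  have hq0 : 0 < q := lt_trans zero_lt_one hq
  set x : ℝ := -q with hxdef
  have hx : x ≠ 0 := by simp [hxdef]; linarith
  have habs : |x| = q := by rw [hxdef, abs_neg, abs_of_pos hq0]
  -- powers of x are never 1 (k ≥ 1)
  have hxpow : ∀ k : ℕ, 1 ≤ k → x ^ k ≠ 1 := by
    intro k hk h
    have h1 : |x ^ k| = 1 := by rw [h]; norm_num
    rw [abs_pow, habs] at h1
    have : 1 < q ^ k := one_lt_pow₀ hq (by omega)
    linarith
  set y : ℝ := x⁻¹ with hydef
  have hxyk : ∀ k : ℕ, y ^ k * x ^ k = 1 := by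
    intro k
    rw [hydef, inv_pow, inv_mul_cancel₀ (pow_ne_zero k hx)]
  have hy : ∀ k : ℕ, 1 ≤ k → y ^ k ≠ 1 := by
    intro k hk h
    have := hxyk k
    rw [h, one_mul] at this
    exact hxpow k hk this
  have hynz : y ≠ 0 := inv_ne_zero hx
  -- node injectivity
  have hnode : ∀ a b : ℕ, x ^ a = x ^ b → a = b := by
    intro a b h
    have h1 : q ^ a = q ^ b := by
      have := congrArg abs h
      rwa [abs_pow, abs_pow, habs] at this
    rcases lt_trichotomy a b with hlt | he | hgt
    · exact absurd h1 (ne_of_lt (pow_lt_pow_right₀ hq hlt))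
    · exact he
    · exact absurd h1.symm (ne_of_lt (pow_lt_pow_right₀ hq hgt))
  -- nodes
  set ν : ℕ → ℝ := fun m => x ^ (2 * n - m) with hνdef
  have hνinj : ∀ a b : ℕ, a ≤ 2 * n → b ≤ 2 * n → ν a = ν b → a = b := by
    intro a b ha hb h
    have := hnode _ _ h
    omega
  -- Step A: evaluation formula for the interpolation polynomials
  have hA : ∀ l, l ≤ 2 * n → ∀ w : ℝ,
      ∑ s ∈ range (l + 1), d s l * w ^ s = d l l * ∏ m ∈ range l, (w - ν m) := by
    intro l hl
    refine interp l (fun s => d s l) ν (fun i j hi hj h => hνinj i j (by omega) (by omega) h) ?_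
    intro i hi
    have h0 := congrFun (hd l hl) ⟨i, by omega⟩
    rw [Matrix.mulVec, dotProduct] at h0
    rw [Pi.single_apply] at h0
    rw [← Fin.sum_univ_eq_sum_range (fun s => d s l * ν i ^ s) (l + 1)]
    have hsummand : ∀ s : Fin (l + 1), d (s : ℕ) l * ν i ^ (s : ℕ)
        = Mmat q n l ⟨i, by omega⟩ s * d (s : ℕ) l := by
      intro s
      have hνpow : ν i ^ (s : ℕ) = (-q) ^ ((s : ℕ) * (2 * n - i)) := by
        rw [hνdef, hxdef, pow_mul']
      rw [Mmat]
      simp only [Matrix.of_apply]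
      rw [hνpow]
      ring
    rw [Finset.sum_congr rfl (fun s _ => hsummand s), h0]
    have : ((⟨i, by omega⟩ : Fin (l + 1)) = Fin.last l) ↔ i = l := by
      rw [Fin.ext_iff]; simp [Fin.last]
    simp only [this]
  -- value facts needed again: at i = l the interpolation sum equals 1
  have hval1 : ∀ l, l ≤ 2 * n → d l l * ∏ m ∈ range l, (ν l - ν m) = 1 := by
    intro l hl
    have h0 := congrFun (hd l hl) (Fin.last l)
    rw [Matrix.mulVec, dotProduct] at h0
    rw [Pi.single_apply, if_pos rfl] at h0
    rw [← hA l hl (ν l)]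
    rw [← Fin.sum_univ_eq_sum_range (fun s => d s l * ν l ^ s) (l + 1)]
    rw [← h0]
    refine Finset.sum_congr rfl fun s _ => ?_
    have hνpow : ν l ^ (s : ℕ) = (-q) ^ ((s : ℕ) * (2 * n - l)) := by
      rw [hνdef, hxdef, pow_mul']
    rw [Mmat]
    simp only [Matrix.of_apply, Fin.val_last]
    rw [hνpow]
    ring
  have hπ : ∀ i, i ≤ 2 * n → ∏ m ∈ range i, (ν i - ν m) ≠ 0 := by
    intro i hi
    refine prod_ne_zero_iff.2 fun m hm => sub_ne_zero.2 fun h => ?_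
    have hm' := mem_range.1 hm
    have := hνinj i m hi (by omega) h
    omega
  -- the actual Newton coefficients
  set c : ℕ → ℝ := fun l => if h : l < 2 * n + 1 then d l l * K ⟨l, h⟩ else 0 with hcdef
  have hrow : ∀ i : Fin (2 * n + 1),
      ∑ l ∈ range (2 * n + 1), c l * ∏ m ∈ range l, (ν (i : ℕ) - ν m) = v i := by
    intro i
    have h0 := congrFun hK i
    rw [Matrix.mulVec, dotProduct] at h0
    rw [← h0]
    rw [← Fin.sum_univ_eq_sum_range (fun l => c l * ∏ m ∈ range l, (ν (i : ℕ) - ν m)) (2 * n + 1)]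
    refine Finset.sum_congr rfl fun l _ => ?_
    rw [Matrix.mul_apply]
    have hinner : ∑ s : Fin (2 * n + 1), Mmat q n (2 * n) i s * Δ s l
        = d (l : ℕ) (l : ℕ) * ∏ m ∈ range (l : ℕ), (ν (i : ℕ) - ν m) := by
      rw [← hA (l : ℕ) (by omega) (ν (i : ℕ))]
      have hsummand : ∀ s : Fin (2 * n + 1), Mmat q n (2 * n) i s * Δ s l
          = if (s : ℕ) ≤ (l : ℕ) then d (s : ℕ) (l : ℕ) * ν (i : ℕ) ^ (s : ℕ) else 0 := by
        intro s
        rw [hΔ s l]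
        have hνpow : ν (i : ℕ) ^ (s : ℕ) = (-q) ^ ((s : ℕ) * (2 * n - (i : ℕ))) := by
          rw [hνdef, hxdef, pow_mul']
        rw [Mmat]
        simp only [Matrix.of_apply]
        rw [hνpow]
        by_cases hsl : (s : ℕ) ≤ (l : ℕ)
        · rw [if_pos hsl, if_pos hsl]; ring
        · rw [if_neg hsl, if_neg hsl, mul_zero]
      rw [Finset.sum_congr rfl (fun s _ => hsummand s)]
      rw [Fin.sum_univ_eq_sum_range
        (fun s => if s ≤ (l : ℕ) then d s (l : ℕ) * ν (i : ℕ) ^ s else 0) (2 * n + 1)]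
      rw [← Finset.sum_subset (Finset.range_subset_range.2 (by omega : (l : ℕ) + 1 ≤ 2 * n + 1))
        (fun s _ hs => if_neg (by simp only [mem_range] at hs ⊢; omega))]
      refine Finset.sum_congr rfl fun s hs => ?_
      rw [if_pos (by simp only [mem_range] at hs; omega)]
    rw [hinner, hcdef]
    simp only [dif_pos l.isLt]
    rw [Fin.eta]
    ring
  -- x^a * y^b = x^(a-b)
  have hconv : ∀ a b : ℕ, b ≤ a → x ^ a * y ^ b = x ^ (a - b) := by
    intro a b hba
    have h1 : x ^ (a - b) * x ^ b = x ^ a := by rw [← pow_add]; congr 1; omega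
    calc x ^ a * y ^ b = x ^ (a - b) * (y ^ b * x ^ b) := by rw [← h1]; ring
    _ = x ^ (a - b) := by rw [hxyk b, mul_one]
  have hconvy : ∀ a b : ℕ, b ≤ a → y ^ a * x ^ b = y ^ (a - b) := by
    intro a b hba
    have h1 : y ^ (a - b) * y ^ b = y ^ a := by rw [← pow_add]; congr 1; omega
    calc y ^ a * x ^ b = y ^ (a - b) * (y ^ b * x ^ b) := by rw [← h1]; ring
    _ = y ^ (a - b) := by rw [hxyk b, mul_one]
  -- the candidate coefficients
  set cstar : ℕ → ℝ := fun l =>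
    if l = 0 then 0 else y ^ (2 * n * n + 2 * n * l) * (NN y n l / DD y l) with hcsdef
  have hstar : ∀ i : Fin (2 * n + 1),
      ∑ l ∈ range (2 * n + 1), cstar l * ∏ m ∈ range l, (ν (i : ℕ) - ν m) = v i := by
    intro i
    have hterm : ∀ l ∈ range (2 * n + 1), cstar l * ∏ m ∈ range l, (ν (i : ℕ) - ν m)
        = y ^ (2 * n * n) * (NN y n l / DD y l * ∏ j ∈ range l, (y ^ (i : ℕ) - y ^ j))
          - (if l = 0 then y ^ (2 * n * n) else 0) := by
      intro l hl
      have hlle : l ≤ 2 * n := by simp only [mem_range] at hl; omega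
      have hfac : ∏ m ∈ range l, (ν (i : ℕ) - ν m)
          = (x ^ (2 * n)) ^ l * ∏ j ∈ range l, (y ^ (i : ℕ) - y ^ j) := by
        have hc : (x ^ (2 * n)) ^ l = ∏ _m ∈ range l, x ^ (2 * n) := by
          rw [Finset.prod_const, card_range]
        rw [hc, ← Finset.prod_mul_distrib]
        refine Finset.prod_congr rfl fun m hm => ?_
        have hm' : m ≤ 2 * n := by have := mem_range.1 hm; omega
        have hi' : (i : ℕ) ≤ 2 * n := by omega
        rw [hνdef]
        simp only []
        rw [mul_sub, mul_comm (x ^ (2*n)) (y ^ (i:ℕ)), mul_comm (x ^ (2*n)) (y ^ m)]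
        rw [mul_comm (y ^ (i:ℕ)) (x ^ (2*n)), mul_comm (y ^ m) (x ^ (2*n))]
        rw [hconv (2 * n) (i : ℕ) hi', hconv (2 * n) m hm']
      rcases eq_or_ne l 0 with rfl | hl0
      · simp [hcsdef, NN_zero, DD_zero]
      · rw [if_neg hl0, hfac, hcsdef]
        simp only [if_neg hl0]
        have : y ^ (2 * n * n + 2 * n * l) * (x ^ (2 * n)) ^ l = y ^ (2 * n * n) := by
          rw [← pow_mul, pow_add]
          have := hxyk (2 * n * l)
          calc y ^ (2*n*n) * y ^ (2*n*l) * x ^ (2*n*l) = y ^ (2*n*n) * (y ^ (2*n*l) * x ^ (2*n*l)) := by ring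
          _ = y ^ (2 * n * n) := by rw [this, mul_one]
        rw [sub_zero]
        calc (y ^ (2*n*n + 2*n*l) * (NN y n l / DD y l)) * ((x ^ (2*n)) ^ l * ∏ j ∈ range l, (y ^ (i:ℕ) - y ^ j))
            = (y ^ (2*n*n + 2*n*l) * (x ^ (2*n)) ^ l) * (NN y n l / DD y l * ∏ j ∈ range l, (y ^ (i:ℕ) - y ^ j)) := by ring
        _ = y ^ (2*n*n) * (NN y n l / DD y l * ∏ j ∈ range l, (y ^ (i:ℕ) - y ^ j)) := by rw [this]
    rw [Finset.sum_congr rfl hterm, Finset.sum_sub_distrib]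
    have hsum1 : ∑ l ∈ range (2 * n + 1),
        y ^ (2 * n * n) * (NN y n l / DD y l * ∏ j ∈ range l, (y ^ (i : ℕ) - y ^ j))
        = y ^ (2 * n * n) * (y ^ (i : ℕ)) ^ n := by
      rw [← Finset.mul_sum]
      congr 1
      rw [← Finset.sum_subset (Finset.range_subset_range.2 (by omega : n + 1 ≤ 2 * n + 1))
        (fun l _ hl => by
          rw [NN_degenerate y (by simp only [mem_range] at hl ⊢; omega), zero_div, zero_mul])]
      exact (newton hy n (y ^ (i : ℕ))).symm
    have hsum2 : ∑ l ∈ range (2 * n + 1), (if l = 0 then y ^ (2 * n * n) else (0:ℝ))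
        = y ^ (2 * n * n) := by
      rw [Finset.sum_ite_eq' (range (2 * n + 1)) 0 (fun _ => y ^ (2 * n * n))]
      simp
    rw [hsum1, hsum2, hv i]
    rcases eq_or_ne ((i : ℕ)) 0 with hi0 | hi0
    · rw [if_pos hi0, hi0]
      simp
    · rw [if_neg hi0]
      have he1 : (n : ℤ) * (2 * (n : ℤ) - ((i : ℕ) : ℤ)) - 4 * (n : ℤ) ^ 2
          = -(((2 * n * n + n * (i : ℕ) : ℕ)) : ℤ) := by push_cast; ring
      have he2 : (-2 : ℤ) * (n : ℤ) ^ 2 = -(((2 * n * n : ℕ)) : ℤ) := by push_cast; ring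
      rw [he1, he2, hxdef]
      rw [zpow_neg, zpow_natCast, zpow_neg, zpow_natCast, ← inv_pow, ← inv_pow, ← hxdef, ← hydef]
      rw [← pow_mul, mul_comm (i : ℕ) n, ← pow_add]
  -- uniqueness of the Newton coefficients
  have hπzero : ∀ i l : ℕ, i < l → ∏ m ∈ range l, (ν i - ν m) = 0 := fun i l hil =>
    prod_eq_zero (mem_range.2 hil) (sub_self _)
  have huniq : ∀ i, i ≤ 2 * n → c i = cstar i := by
    intro i
    induction i using Nat.strong_induction_on with
    | _ i IH =>
      intro hi
      have h1 := hrow ⟨i, by omega⟩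
      have h2 := hstar ⟨i, by omega⟩
      simp only [Fin.val_mk] at h1 h2
      rw [← h2] at h1
      have htrunc : ∀ f : ℕ → ℝ, ∑ l ∈ range (2 * n + 1), f l * ∏ m ∈ range l, (ν i - ν m)
          = (∑ l ∈ range i, f l * ∏ m ∈ range l, (ν i - ν m))
            + f i * ∏ m ∈ range i, (ν i - ν m) := by
        intro f
        rw [← sum_range_succ]
        symm
        refine Finset.sum_subset (Finset.range_subset_range.2 (by omega)) fun l _ hnl => ?_
        have hil : i < l := by simp only [mem_range] at hnl; omega
        rw [hπzero i l hil, mul_zero]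
      rw [htrunc c, htrunc cstar] at h1
      have hsums : ∑ l ∈ range i, c l * ∏ m ∈ range l, (ν i - ν m)
          = ∑ l ∈ range i, cstar l * ∏ m ∈ range l, (ν i - ν m) :=
        Finset.sum_congr rfl fun l hl => by
          rw [IH l (mem_range.1 hl) (by have := mem_range.1 hl; omega)]
      rw [hsums] at h1
      have h3 : c i * ∏ m ∈ range i, (ν i - ν m) = cstar i * ∏ m ∈ range i, (ν i - ν m) := by
        linarith
      exact mul_right_cancel₀ (hπ i hi) h3
  -- the product formula for the explicit coefficients
  have hprod : ∀ l : ℕ, l ≤ n - 1 →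
      ∏ j ∈ Finset.Icc 1 l, ((-q) ^ ((n : ℤ) + (j : ℤ)) *
          (((-q) ^ (n : ℤ) - (-q) ^ ((j : ℤ) - 1)) / ((-q) ^ (j : ℤ) - 1)))
        = (x ^ (2 * n)) ^ l * (NN y n l / DD y l) := by
    intro l
    induction l with
    | zero => simp [NN_zero, DD_zero]
    | succ l IHl =>
      intro hl
      rw [Finset.prod_Icc_succ_top (by omega : 1 ≤ l + 1), IHl (by omega)]
      have e1 : (-q) ^ ((n : ℤ) + ((l + 1 : ℕ) : ℤ)) = x ^ (n + l + 1) := by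
        rw [(by push_cast; ring : (n : ℤ) + ((l + 1 : ℕ) : ℤ) = ((n + l + 1 : ℕ) : ℤ)),
          zpow_natCast, ← hxdef]
      have e2 : (-q) ^ (n : ℤ) = x ^ n := by rw [zpow_natCast, ← hxdef]
      have e3 : (-q) ^ (((l + 1 : ℕ) : ℤ) - 1) = x ^ l := by
        rw [(by push_cast; ring : ((l + 1 : ℕ) : ℤ) - 1 = ((l : ℕ) : ℤ)), zpow_natCast, ← hxdef]
      have e4 : (-q) ^ (((l + 1 : ℕ) : ℤ)) = x ^ (l + 1) := by rw [zpow_natCast, ← hxdef]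
      rw [e1, e2, e3, e4]
      have eA : x ^ (n + l + 1) * y ^ (l + 1) = x ^ n :=
        (by rw [hconv (n + l + 1) (l + 1) (by omega)]; congr 1; omega)
      have eB : x ^ (2 * n) * y ^ (n - l) = x ^ (n + l) := by
        rw [hconv (2 * n) (n - l) (by omega)]; congr 1; omega
      have hden1 : x ^ (l + 1) - 1 ≠ 0 := sub_ne_zero.2 (hxpow (l + 1) (by omega))
      have hden2 : y ^ (l + 1) - 1 ≠ 0 := sub_ne_zero.2 (hy (l + 1) (by omega))
      have hkey2 : x ^ (n + l + 1) * ((x ^ n - x ^ l) / (x ^ (l + 1) - 1))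
          = x ^ (2 * n) * ((y ^ (n - l) - 1) / (y ^ (l + 1) - 1)) := by
        rw [← mul_div_assoc, ← mul_div_assoc, div_eq_div_iff hden1 hden2]
        linear_combination (x ^ n - x ^ l) * eA - (x ^ (l + 1) - 1) * eB
      rw [hkey2, NN_succ, DD_succ, pow_succ, ← div_mul_div_comm]
      ring
  constructor
  · intro l hl
    have hm2 : n - l ≤ 2 * n := by omega
    have hc : d (n - l) (n - l) * K ⟨n - l, by omega⟩ = c (n - l) := by
      rw [hcdef]; simp only [dif_pos (by omega : n - l < 2 * n + 1)]
    rw [hc, huniq (n - l) hm2, hcsdef]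
    simp only [if_neg (by omega : ¬ n - l = 0)]
    rw [gauss_symm hy (by omega : l ≤ n), hprod l hl]
    obtain ⟨a, ha⟩ : ∃ a, n = l + a := ⟨n - l, by omega⟩
    have hsub : n - l = a := by omega
    rw [hsub]
    have hz : ((-q) : ℝ) ^ (-4 * (n : ℤ) ^ 2) = y ^ (4 * n * n) := by
      rw [(by push_cast; ring : -4 * (n : ℤ) ^ 2 = -(((4 * n * n : ℕ)) : ℤ)), zpow_neg,
        zpow_natCast, ← hxdef, ← inv_pow, ← hydef]
    have hle : 2 * n * l ≤ 4 * n * n :=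
      Nat.mul_le_mul (by omega : 2 * n ≤ 4 * n) (by omega : l ≤ n)
    have hexp : 4 * n * n - 2 * n * l = 2 * n * n + 2 * n * a := by
      refine Nat.sub_eq_of_eq_add ?_
      subst ha; ring
    have h5 : y ^ (2 * n * n + 2 * n * a) = y ^ (4 * n * n) * (x ^ (2 * n)) ^ l := by
      rw [← pow_mul x, hconvy (4 * n * n) (2 * n * l) hle, hexp]
    rw [hz, h5]
    ring
  · intro i h1 h2
    have hci : c i = d i i * K ⟨i, by omega⟩ := by
      rw [hcdef]; simp only [dif_pos (by omega : i < 2 * n + 1)]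
    have hcc := huniq i (by omega)
    rw [hci] at hcc
    intro hK0
    rw [hK0, mul_zero, hcsdef] at hcc
    simp only [if_neg (by omega : ¬ i = 0)] at hcc
    have hne : y ^ (2 * n * n + 2 * n * i) * (NN y n i / DD y i) ≠ 0 :=
      mul_ne_zero (pow_ne_zero _ hynz)
        (div_ne_zero (NN_ne_zero hy h2) (DD_ne_zero hy i))
    exact hne hcc.symm
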